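/- Let M : 𝕋 → SL(2,ℝ) be continuous of degree k, and suppose A⁽¹⁾, A⁽²⁾ : 𝕋 → SL(2,ℝ) are continuous, homotopic to the identity, and satisfy M(x+α)⁻¹ A⁽²⁾(x) M(x) = A⁽¹⁾(x). Then the fibered rotation numbers satisfy ρ(α, A⁽¹⁾) = ρ(α, A⁽²⁾) − kα/2 (mod ℤ). -/

import Mathlib

open Real




open Real

/-- Rotation matrix `R_θ`, rotation by angle `2πθ`. -/
noncomputable def Rot (θ : ℝ) : Matrix (Fin 2) (Fin 2) ℝ :=
  !![Real.cos (2 * π * θ), -Real.sin (2 * π * θ);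
     Real.sin (2 * π * θ),  Real.cos (2 * π * θ)]

/-- `φ` is a (continuous, doubly periodic) lift of the projective action of `A`,
with positive radial component `v`. -/
def IsLift (A : ℝ → Matrix (Fin 2) (Fin 2) ℝ) (φ v : ℝ → ℝ → ℝ) : Prop :=
  Continuous (fun p : ℝ × ℝ => φ p.1 p.2) ∧
  (∀ x y, φ (x + 1) y = φ x y ∧ φ x (y + 1) = φ x y) ∧
  (∀ x y, 0 < v x y) ∧
  ∀ x y, (A x).mulVec ![Real.cos (2 * π * y), Real.sin (2 * π * y)] =
    v x y • ![Real.cos (2 * π * (y + φ x y)), Real.sin (2 * π * (y + φ x y))]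

/-- Iterates of the lifted fibered dynamics `(x, y) ↦ (x + α, y + φ(x,y))`, second
coordinate. -/
noncomputable def liftIter (α : ℝ) (φ : ℝ → ℝ → ℝ) (x y : ℝ) : ℕ → ℝ
  | 0 => y
  | n + 1 => liftIter α φ x y n + φ (x + n * α) (liftIter α φ x y n)

/-- `ρ` is the fibered rotation number of the cocycle `(α, A)` (for `A` homotopic to the
identity): the asymptotic average rotation of the lifted projective dynamics. -/
def IsFiberedRotNum (α : ℝ) (A : ℝ → Matrix (Fin 2) (Fin 2) ℝ) (ρ : ℝ) : Prop :=
  ∃ φ v : ℝ → ℝ → ℝ, IsLift A φ v ∧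
    ∀ x y : ℝ, Filter.Tendsto (fun n : ℕ => (liftIter α φ x y n - y) / n)
      Filter.atTop (nhds ρ)

/-- `A` is homotopic to the identity through continuous periodic `SL(2,ℝ)`-valued maps. -/
def HtpyToId (A : ℝ → Matrix (Fin 2) (Fin 2) ℝ) : Prop :=
  ∃ H : ℝ → ℝ → Matrix (Fin 2) (Fin 2) ℝ,
    Continuous (fun p : ℝ × ℝ => H p.1 p.2) ∧
    (∀ t x, (H t x).det = 1 ∧ H t (x + 1) = H t x) ∧
    (∀ x, H 0 x = A x ∧ H 1 x = 1)

/-- `M` has degree `k`: it is homotopic, through continuous `SL(2,ℝ)`-valued maps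
periodic up to sign, to `x ↦ R_{kx/2}`. -/
def HasDegree (M : ℝ → Matrix (Fin 2) (Fin 2) ℝ) (k : ℤ) : Prop :=
  ∃ H : ℝ → ℝ → Matrix (Fin 2) (Fin 2) ℝ,
    Continuous (fun p : ℝ × ℝ => H p.1 p.2) ∧
    (∀ t x, (H t x).det = 1 ∧ (H t (x + 1) = H t x ∨ H t (x + 1) = -(H t x))) ∧
    (∀ x, H 0 x = M x ∧ H 1 x = Rot ((k : ℝ) * x / 2))


/-- A continuous function on a preconnected set whose values are integers is constant. -/
lemma constOn_of_int_valued {X : Type*} [TopologicalSpace X] {s : Set X}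
    (hs : IsPreconnected s) {f : X → ℝ} (hf : ContinuousOn f s)
    (hint : ∀ p ∈ s, ∃ n : ℤ, f p = n) :
    ∀ p ∈ s, ∀ q ∈ s, f p = f q := by
  intro p hp q hq
  by_contra hne
  wlog hlt : f p < f q generalizing p q
  · exact this q hq p hp (Ne.symm hne) (lt_of_le_of_ne (not_lt.mp hlt) (Ne.symm hne))
  obtain ⟨n, hn⟩ := hint p hp
  obtain ⟨m, hm⟩ := hint q hq
  have hnm : n < m := by rw [hn, hm] at hlt; exact_mod_cast hlt
  have hmem : (n : ℝ) + 1/2 ∈ Set.Icc (f p) (f q) := by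
    constructor
    · rw [hn]; linarith
    · rw [hm]
      have h1 : (n : ℝ) + 1 ≤ m := by exact_mod_cast hnm
      linarith
  obtain ⟨r, hr, hfr⟩ := hs.intermediate_value hp hq hf hmem
  obtain ⟨l, hl⟩ := hint r hr
  rw [hl] at hfr
  have : (2 * l : ℤ) = 2 * n + 1 := by
    have : (2 * l : ℝ) = 2 * n + 1 := by push_cast; linarith
    exact_mod_cast this
  omega

/-- Continuous logarithm lifting for nonvanishing maps on a proper real normed space. -/
lemma exists_continuous_log {E : Type*} [NormedAddCommGroup E] [NormedSpace ℝ E]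
    [ProperSpace E] {F : E → ℂ} (hF : Continuous F) (h0 : ∀ p, F p ≠ 0) :
    ∃ L : E → ℂ, Continuous L ∧ ∀ p, Complex.exp (L p) = F p := by
  -- partial lifts on closed balls
  -- For N ≥ 1 define partL N p := log (F 0) + ∑_{j<N} log (F ((j+1)/N • p) / F (j/N • p))
  set partL : ℕ → E → ℂ := fun N p => Complex.log (F 0) +
    ∑ j ∈ Finset.range N, Complex.log (F ((((j:ℝ)+1)/N) • p) / F (((j:ℝ)/N) • p)) with hpartL
  have hexp : ∀ N : ℕ, 0 < N → ∀ p, Complex.exp (partL N p) = F p := by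
    intro N hN p
    have key : ∀ m : ℕ, Complex.exp (Complex.log (F 0) +
        ∑ j ∈ Finset.range m, Complex.log (F ((((j:ℝ)+1)/N) • p) / F (((j:ℝ)/N) • p)))
        = F (((m:ℝ)/N) • p) := by
      intro m
      induction m with
      | zero => simp [Complex.exp_log (h0 0)]
      | succ m ih =>
        rw [Finset.sum_range_succ, ← add_assoc, Complex.exp_add, ih,
          Complex.exp_log (div_ne_zero (h0 _) (h0 _))]
        rw [mul_div_cancel₀ _ (h0 _)]
        norm_num
    have := key N
    rw [hpartL]
    simp only []
    rw [key N, div_self (by positivity : (N:ℝ) ≠ 0), one_smul]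
  -- continuity on closed balls for suitable N
  have hcont : ∀ n : ℕ, ∃ N : ℕ, 0 < N ∧
      ContinuousOn (partL N) (Metric.closedBall (0:E) n) := by
    intro n
    set K := Metric.closedBall (0:E) n with hK
    have hKc : IsCompact K := isCompact_closedBall 0 n
    have h0K : (0:E) ∈ K := Metric.mem_closedBall_self (by positivity)
    obtain ⟨x₀, hx₀, hmin'⟩ := hKc.exists_isMinOn ⟨0, h0K⟩
      ((continuous_norm.comp hF).continuousOn)
    have hmin : ∀ b ∈ K, ‖F x₀‖ ≤ ‖F b‖ := fun b hb => hmin' hb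
    set ε₀ := ‖F x₀‖ with hε₀
    have hε₀pos : 0 < ε₀ := by
      simp only [hε₀, norm_pos_iff]; exact h0 x₀
    have huc := hKc.uniformContinuousOn_of_continuous hF.continuousOn
    rw [Metric.uniformContinuousOn_iff] at huc
    obtain ⟨δ, hδpos, hδ⟩ := huc ε₀ hε₀pos
    refine ⟨⌈(n:ℝ)/δ⌉₊ + 1, Nat.succ_pos _, ?_⟩
    set N := ⌈(n:ℝ)/δ⌉₊ + 1 with hN
    have hNpos : (0:ℝ) < N := by positivity
    have hstep : (n:ℝ)/N < δ := by
      rw [div_lt_iff₀ hNpos]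
      have h1 : (n:ℝ)/δ < N := by
        calc (n:ℝ)/δ ≤ ⌈(n:ℝ)/δ⌉₊ := Nat.le_ceil _
        _ < N := by rw [hN]; exact_mod_cast Nat.lt_succ_self _
      have h2 : (n:ℝ) < N * δ := (div_lt_iff₀ hδpos).mp h1
      linarith
    -- membership of intermediate points
    have hmem : ∀ (c : ℝ), 0 ≤ c → c ≤ 1 → ∀ p ∈ K, c • p ∈ K := by
      intro c hc0 hc1 p hp
      rw [hK, Metric.mem_closedBall, dist_zero_right] at *
      rw [norm_smul, Real.norm_eq_abs, _root_.abs_of_nonneg hc0]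
      calc c * ‖p‖ ≤ 1 * ‖p‖ := by
            exact mul_le_mul_of_nonneg_right hc1 (norm_nonneg p)
      _ ≤ n := by rwa [one_mul]
    refine ContinuousOn.add continuousOn_const ?_
    refine continuousOn_finset_sum _ (fun j hj => ?_)
    simp only [Finset.mem_range] at hj
    have hc1 : (0:ℝ) ≤ ((j:ℝ)+1)/N ∧ ((j:ℝ)+1)/N ≤ 1 := by
      constructor
      · positivity
      · rw [div_le_one hNpos]
        have : (j:ℝ) + 1 ≤ N := by exact_mod_cast hj
        linarith
    have hc2 : (0:ℝ) ≤ (j:ℝ)/N ∧ (j:ℝ)/N ≤ 1 := by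
      constructor
      · positivity
      · rw [div_le_one hNpos]
        have : (j:ℝ) ≤ N := by
          have : (j:ℝ) + 1 ≤ N := by exact_mod_cast hj
          linarith
        exact this
    refine ContinuousOn.clog ?_ ?_
    · exact ((hF.comp (continuous_const_smul _)).div
        (hF.comp (continuous_const_smul _)) (fun p => h0 _)).continuousOn
    · intro p hp
      -- the ratio is in the slit plane
      set a := (((j:ℝ)+1)/N) • p with ha
      set b := ((j:ℝ)/N) • p with hb
      have haK : a ∈ K := hmem _ hc1.1 hc1.2 p hp
      have hbK : b ∈ K := hmem _ hc2.1 hc2.2 p hp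
      have hab : dist a b < δ := by
        have : a - b = ((1:ℝ)/N) • p := by
          rw [ha, hb, ← sub_smul]; congr 1; field_simp; ring
        rw [dist_eq_norm, this, norm_smul, Real.norm_eq_abs,
          _root_.abs_of_nonneg (by positivity : (0:ℝ) ≤ 1/N)]
        have hpn : ‖p‖ ≤ (n:ℝ) := by
          rwa [hK, Metric.mem_closedBall, dist_zero_right] at hp
        calc 1/(N:ℝ) * ‖p‖ ≤ 1/N * n := by
              exact mul_le_mul_of_nonneg_left hpn (by positivity)
        _ = (n:ℝ)/N := by ring
        _ < δ := hstep
      have hFab : ‖F a - F b‖ < ε₀ := by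
        have := hδ a haK b hbK hab
        rwa [Complex.dist_eq] at this
      have hFb : ε₀ ≤ ‖F b‖ := hmin b hbK
      -- show 0 < re (F a / F b)
      left
      have hFbne := h0 b
      have key : ‖F a / F b - 1‖ < 1 := by
        rw [show F a / F b - 1 = (F a - F b) / F b by field_simp]
        rw [norm_div]
        rw [div_lt_one (norm_pos_iff.mpr hFbne)]
        exact lt_of_lt_of_le hFab hFb
      have h1 : |(F a / F b - 1).re| ≤ ‖F a / F b - 1‖ :=
        Complex.abs_re_le_norm _
      have h2 : (F a / F b - 1).re = (F a / F b).re - 1 := by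
        simp [Complex.sub_re]
      linarith [neg_abs_le ((F a / F b - 1).re)]
  -- choose lifts on balls
  choose Nn hNn hLc using hcont
  set Lb : ℕ → E → ℂ := fun n => partL (Nn n) with hLb
  have hLbexp : ∀ n p, Complex.exp (Lb n p) = F p := fun n p => hexp _ (hNn n) p
  have hLb0 : ∀ n, Lb n 0 = Complex.log (F 0) := by
    intro n
    rw [hLb]
    simp only [hpartL, smul_zero]
    rw [div_self (h0 0), Complex.log_one]
    simp
  have hagree : ∀ a b : ℕ, a ≤ b → ∀ p ∈ Metric.closedBall (0:E) a, Lb b p = Lb a p := by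
    intro a b hab p hp
    have hsub : Metric.closedBall (0:E) a ⊆ Metric.closedBall (0:E) b :=
      Metric.closedBall_subset_closedBall (by exact_mod_cast hab)
    set d : E → ℝ := fun q => (Lb b q - Lb a q).im / (2*π) with hd
    have hint : ∀ q, ∃ k : ℤ, Lb b q - Lb a q = k * (2*π*Complex.I) := by
      intro q
      have : Complex.exp (Lb b q) = Complex.exp (Lb a q) := by
        rw [hLbexp, hLbexp]
      rw [Complex.exp_eq_exp_iff_exists_int] at this
      obtain ⟨k, hk⟩ := this
      exact ⟨k, by rw [hk]; ring⟩
    have hdint : ∀ q ∈ Metric.closedBall (0:E) a, ∃ k : ℤ, d q = k := by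
      intro q _
      obtain ⟨k, hk⟩ := hint q
      refine ⟨k, ?_⟩
      rw [hd]
      simp only [hk]
      rw [show ((k:ℂ) * (2*π*Complex.I)).im = k * (2*π) by simp]
      field_simp
    have hdcont : ContinuousOn d (Metric.closedBall (0:E) a) := by
      refine ContinuousOn.div_const ?_ _
      exact (Complex.continuous_im.comp_continuousOn
        (((hLc b).mono hsub).sub (hLc a))).congr (fun q hq => rfl)
    have hconn : IsPreconnected (Metric.closedBall (0:E) a) :=
      (convex_closedBall (0:E) (a:ℝ)).isPreconnected
    have h0mem : (0:E) ∈ Metric.closedBall (0:E) a :=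
      Metric.mem_closedBall_self (by positivity)
    have hd0 : d 0 = 0 := by
      rw [hd]; simp [hLb0]
    have hdconst := constOn_of_int_valued hconn hdcont hdint p hp 0 h0mem
    rw [hd0] at hdconst
    obtain ⟨k, hk⟩ := hint p
    have hkim : d p = k := by
      rw [hd]
      simp only [hk]
      rw [show ((k:ℂ) * (2*π*Complex.I)).im = k * (2*π) by simp]
      field_simp
    have hk0 : (k:ℝ) = 0 := by rw [← hkim]; exact hdconst
    have hk0' : (k:ℂ) = 0 := by exact_mod_cast hk0
    have : Lb b p - Lb a p = 0 := by rw [hk, hk0', zero_mul]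
    linear_combination this
  refine ⟨fun p => Lb ⌈‖p‖⌉₊ p, ?_, fun p => hLbexp _ p⟩
  have hmemceil : ∀ (p : E) (n : ℕ), ‖p‖ ≤ (n:ℝ) → p ∈ Metric.closedBall (0:E) n := by
    intro p n h
    rwa [Metric.mem_closedBall, dist_zero_right]
  have hLagree : ∀ (n : ℕ) (p : E), ‖p‖ ≤ (n:ℝ) → Lb ⌈‖p‖⌉₊ p = Lb n p := by
    intro n p hpn
    have hp1 : p ∈ Metric.closedBall (0:E) (⌈‖p‖⌉₊:ℝ) := hmemceil p _ (Nat.le_ceil _)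
    have hp2 : p ∈ Metric.closedBall (0:E) n := hmemceil p n hpn
    rcases le_total ⌈‖p‖⌉₊ n with h | h
    · exact (hagree _ _ h p hp1).symm
    · exact hagree _ _ h p hp2
  rw [continuous_iff_continuousAt]
  intro p
  set n := ⌈‖p‖⌉₊ + 1 with hn
  have hplt : ‖p‖ < (n:ℝ) := by
    calc ‖p‖ ≤ (⌈‖p‖⌉₊:ℝ) := Nat.le_ceil _
    _ < n := by exact_mod_cast Nat.lt_succ_self _
  have hball : Metric.closedBall (0:E) n ∈ nhds p := by
    apply Metric.closedBall_mem_nhds_of_mem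
    rwa [Metric.mem_ball, dist_zero_right]
  have heq : ∀ q ∈ Metric.closedBall (0:E) n, Lb ⌈‖q‖⌉₊ q = Lb n q := by
    intro q hq
    exact hLagree n q (by rwa [Metric.mem_closedBall, dist_zero_right] at hq)
  have hcn : ContinuousAt (Lb n) p := (hLc n).continuousAt hball
  exact hcn.congr (Filter.eventuallyEq_of_mem hball heq).symm



noncomputable def uvec (a : ℝ) : Fin 2 → ℝ := ![Real.cos (2 * π * a), Real.sin (2 * π * a)]

noncomputable def toC (v : Fin 2 → ℝ) : ℂ := (v 0 : ℂ) + (v 1 : ℂ) * Complex.I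

lemma toC_inj {v w : Fin 2 → ℝ} (h : toC v = toC w) : v = w := by
  have hre := congrArg Complex.re h
  have him := congrArg Complex.im h
  simp [toC] at hre him
  funext i
  fin_cases i
  · exact hre
  · exact him

lemma toC_smul (r : ℝ) (v : Fin 2 → ℝ) : toC (r • v) = (r : ℂ) * toC v := by
  simp [toC]; ring

lemma toC_neg (v : Fin 2 → ℝ) : toC (-v) = -toC v := by
  simp [toC]; ring

lemma toC_uvec (a : ℝ) : toC (uvec a) = Complex.exp ((2 * π * a : ℝ) * Complex.I) := by
  rw [Complex.exp_mul_I]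
  simp [toC, uvec, Complex.ofReal_cos, Complex.ofReal_sin]

lemma uvec_ne_zero (a : ℝ) : uvec a ≠ 0 := by
  intro h
  have : toC (uvec a) = 0 := by rw [h]; simp [toC]
  rw [toC_uvec] at this
  exact Complex.exp_ne_zero _ this

lemma uvec_add_one (a : ℝ) : uvec (a + 1) = uvec a := by
  have h1 : 2 * π * (a + 1) = 2 * π * a + 2 * π := by ring
  simp only [uvec, h1, Real.cos_add_two_pi, Real.sin_add_two_pi]

lemma expuv_inj {r s a b : ℝ} (hr : 0 < r) (hs : 0 < s)
    (h : r • uvec a = s • uvec b) : r = s ∧ ∃ n : ℤ, a = b + n := by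
  have hC := congrArg toC h
  rw [toC_smul, toC_smul, toC_uvec, toC_uvec] at hC
  have habs := congrArg norm hC
  simp only [norm_mul, Complex.norm_exp, Complex.norm_real, Real.norm_eq_abs] at habs
  have hre : ∀ c : ℝ, (((2 * π * c : ℝ) : ℂ) * Complex.I).re = 0 := by intro c; simp
  rw [hre a, hre b, Real.exp_zero, mul_one, mul_one, abs_of_pos hr, abs_of_pos hs] at habs
  refine ⟨habs, ?_⟩
  rw [habs] at hC
  have hC2 : Complex.exp (((2 * π * a : ℝ) : ℂ) * Complex.I)
      = Complex.exp (((2 * π * b : ℝ) : ℂ) * Complex.I) :=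
    mul_left_cancel₀ (by exact_mod_cast hs.ne') hC
  rw [Complex.exp_eq_exp_iff_exists_int] at hC2
  obtain ⟨n, hn⟩ := hC2
  refine ⟨n, ?_⟩
  have him : 2 * π * a = 2 * π * b + n * (2 * π) := by
    have h := congrArg Complex.im hn
    push_cast at h
    simpa using h
  have h2 : (2*π) * a = (2*π) * (b + n) := by linarith
  exact mul_left_cancel₀ (by positivity) h2

lemma Rot_mulVec (θ y : ℝ) : (Rot θ).mulVec (uvec y) = uvec (y + θ) := by
  funext i
  have h : 2 * π * (y + θ) = 2 * π * θ + 2 * π * y := by ring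
  fin_cases i <;>
    simp [Rot, uvec, Matrix.mulVec, dotProduct, Fin.sum_univ_two, h,
      Real.cos_add, Real.sin_add] <;> ring

lemma per_int {g : ℝ → ℝ} (hg : ∀ s, g (s + 1) = g s) : ∀ (m : ℤ) (s : ℝ), g (s + m) = g s := by
  intro m
  induction m using Int.induction_on with
  | zero => simp
  | succ n ih =>
    intro s
    have h1 : s + ((n:ℤ) + 1 : ℤ) = (s + (n:ℤ)) + 1 := by push_cast; ring
    rw [h1, hg, ih]
  | pred n ih =>
    intro s
    have h1 : s + (-(n:ℤ) - 1 : ℤ) = (s + (-(n:ℤ) - 1 : ℤ)) := rfl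
    have h2 : g (s + (-(n:ℤ) - 1 : ℤ) + 1) = g (s + (-(n:ℤ) - 1 : ℤ)) := hg _
    have h3 : s + (-(n:ℤ) - 1 : ℤ) + 1 = s + (-(n:ℤ) : ℤ) := by push_cast; ring
    rw [h3] at h2
    rw [← h2, ih]

lemma mulVec_ne_zero {A : Matrix (Fin 2) (Fin 2) ℝ} (hA : A.det = 1)
    {v : Fin 2 → ℝ} (hv : v ≠ 0) : A.mulVec v ≠ 0 := by
  intro h
  have hu : IsUnit A.det := by rw [hA]; exact isUnit_one
  have : (A⁻¹).mulVec (A.mulVec v) = v := by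
    rw [Matrix.mulVec_mulVec, Matrix.nonsing_inv_mul _ hu, Matrix.one_mulVec]
  rw [h, Matrix.mulVec_zero] at this
  exact hv this.symm

lemma const_of_int_valued {X : Type*} [TopologicalSpace X] [PreconnectedSpace X]
    {f : X → ℝ} (hf : Continuous f) (hint : ∀ p, ∃ n : ℤ, f p = n) (p q : X) : f p = f q :=
  constOn_of_int_valued isPreconnected_univ hf.continuousOn (fun p _ => hint p)
    p (Set.mem_univ p) q (Set.mem_univ q)

theorem stmt6 (α : ℝ) (hα : Irrational α)
    (M A1 A2 : ℝ → Matrix (Fin 2) (Fin 2) ℝ) (k : ℤ)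
    (hMcont : Continuous M) (hMdet : ∀ x, (M x).det = 1)
    (hMper : ∀ x, M (x + 1) = M x ∨ M (x + 1) = -(M x))
    (hdeg : HasDegree M k)
    (hA1cont : Continuous A1) (hA1det : ∀ x, (A1 x).det = 1)
    (hA1per : ∀ x, A1 (x + 1) = A1 x) (hA1htpy : HtpyToId A1)
    (hA2cont : Continuous A2) (hA2det : ∀ x, (A2 x).det = 1)
    (hA2per : ∀ x, A2 (x + 1) = A2 x) (hA2htpy : HtpyToId A2)
    (hconj : ∀ x, (M (x + α))⁻¹ * A2 x * M x = A1 x)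
    (ρ₁ ρ₂ : ℝ) (h1 : IsFiberedRotNum α A1 ρ₁) (h2 : IsFiberedRotNum α A2 ρ₂) :
    ∃ m : ℤ, ρ₁ = ρ₂ - (k : ℝ) * α / 2 + m := by
  classical
  obtain ⟨H, hHcont, hHprop, hHends⟩ := hdeg
  obtain ⟨φ1, v1, ⟨hφ1cont, hφ1per, hv1pos, hφ1lift⟩, hlim1⟩ := h1
  obtain ⟨φ2, v2, ⟨hφ2cont, hφ2per, hv2pos, hφ2lift⟩, hlim2⟩ := h2
  have hπ : (0:ℝ) < π := Real.pi_pos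
  set F : ℝ × ℝ × ℝ → ℂ := fun p => toC ((H p.1 p.2.1).mulVec (uvec p.2.2)) with hF
  have hH2 : Continuous fun p : ℝ × ℝ × ℝ => H p.1 p.2.1 :=
    hHcont.comp (continuous_fst.prodMk (continuous_fst.comp continuous_snd))
  have hFcont : Continuous F := by
    have hy : Continuous fun p : ℝ × ℝ × ℝ => p.2.2 := continuous_snd.comp continuous_snd
    have hcos : Continuous fun p : ℝ × ℝ × ℝ => Real.cos (2 * π * p.2.2) :=
      Real.continuous_cos.comp (by fun_prop)
    have hsin : Continuous fun p : ℝ × ℝ × ℝ => Real.sin (2 * π * p.2.2) :=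
      Real.continuous_sin.comp (by fun_prop)
    have hmv : ∀ i, Continuous fun p : ℝ × ℝ × ℝ => ((H p.1 p.2.1).mulVec (uvec p.2.2)) i := by
      intro i
      have hexpand : (fun p : ℝ × ℝ × ℝ => ((H p.1 p.2.1).mulVec (uvec p.2.2)) i)
          = fun p => H p.1 p.2.1 i 0 * Real.cos (2*π*p.2.2)
            + H p.1 p.2.1 i 1 * Real.sin (2*π*p.2.2) := by
        funext p
        simp [Matrix.mulVec, dotProduct, Fin.sum_univ_two, uvec]
      rw [hexpand]
      exact ((hH2.matrix_elem i 0).mul hcos).add ((hH2.matrix_elem i 1).mul hsin)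
    show Continuous fun p : ℝ × ℝ × ℝ => toC ((H p.1 p.2.1).mulVec (uvec p.2.2))
    unfold toC
    exact (Complex.continuous_ofReal.comp (hmv 0)).add
      ((Complex.continuous_ofReal.comp (hmv 1)).mul continuous_const)
  have hFne : ∀ p, F p ≠ 0 := by
    intro p hzero
    have h1 : (H p.1 p.2.1).mulVec (uvec p.2.2) ≠ 0 :=
      mulVec_ne_zero (hHprop p.1 p.2.1).1 (uvec_ne_zero _)
    apply h1
    apply toC_inj
    rw [show toC ((H p.1 p.2.1).mulVec (uvec p.2.2)) = F p from rfl, hzero]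
    simp [toC]
  obtain ⟨L, hLcont, hLexp⟩ := exists_continuous_log hFcont hFne
  set Θ : ℝ × ℝ × ℝ → ℝ := fun p => (L p).im / (2 * π) with hΘdef
  set w : ℝ × ℝ × ℝ → ℝ := fun p => Real.exp ((L p).re) with hwdef
  have hΘcont : Continuous Θ := (Complex.continuous_im.comp hLcont).div_const _
  have hwpos : ∀ p, 0 < w p := fun p => Real.exp_pos _
  have hact : ∀ p : ℝ × ℝ × ℝ, (H p.1 p.2.1).mulVec (uvec p.2.2) = w p • uvec (Θ p) := by
    intro p
    apply toC_inj
    rw [toC_smul, toC_uvec]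
    have h1 : (2 * π * Θ p : ℝ) = (L p).im := by rw [hΘdef]; field_simp
    rw [h1]
    have h2 : ((w p : ℝ) : ℂ) = Complex.exp (((L p).re : ℝ) : ℂ) := by
      rw [hwdef, Complex.ofReal_exp]
    rw [h2, ← Complex.exp_add]
    have h3 : (((L p).re : ℝ) : ℂ) + (((L p).im : ℝ) : ℂ) * Complex.I = L p :=
      Complex.re_add_im _
    rw [h3, hLexp]
  -- value at t = 1
  have hpoint1 : ∀ x y : ℝ, ∃ n : ℤ, Θ (1,x,y) - y - (k:ℝ)*x/2 = n := by
    intro x y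
    have h := hact (1,x,y)
    simp only at h
    rw [(hHends x).2, Rot_mulVec] at h
    have h1 : (1:ℝ) • uvec (y + (k:ℝ)*x/2) = w (1,x,y) • uvec (Θ (1,x,y)) := by
      rw [one_smul]; exact h
    obtain ⟨n, hn⟩ := (expuv_inj one_pos (hwpos _) h1).2
    exact ⟨-n, by push_cast; linarith⟩
  have hf1cont : Continuous fun q : ℝ × ℝ => Θ (1,q.1,q.2) - q.2 - (k:ℝ)*q.1/2 := by
    have : Continuous fun q : ℝ × ℝ => Θ (1,q.1,q.2) :=
      hΘcont.comp (continuous_const.prodMk continuous_id)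
    fun_prop
  obtain ⟨m1, hm1v⟩ := hpoint1 0 0
  have hm1 : ∀ x y : ℝ, Θ (1,x,y) = y + (k:ℝ)*x/2 + m1 := by
    intro x y
    have h := const_of_int_valued hf1cont
      (fun q => hpoint1 q.1 q.2) (x,y) (0,0)
    simp only at h
    rw [show Θ (1,(0:ℝ),(0:ℝ)) - 0 - (k:ℝ)*0/2 = Θ (1,0,0) by ring] at h
    have h0 : Θ ((1:ℝ),(0:ℝ),(0:ℝ)) - 0 - (k:ℝ)*0/2 = m1 := by
      simpa using hm1v
    linarith [h, h0]
  -- x-shift by 1 : Θ increases by k/2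
  have hsq : ∀ p : ℝ × ℝ × ℝ, ∃ n : ℤ, Θ (p.1, p.2.1 + 1, p.2.2) = Θ p + (n:ℝ)/2 := by
    intro p
    have e1 := hLexp (p.1, p.2.1 + 1, p.2.2)
    have e2 := hLexp p
    have hFeq : F (p.1, p.2.1+1, p.2.2) = F p ∨ F (p.1, p.2.1+1, p.2.2) = -F p := by
      rcases (hHprop p.1 p.2.1).2 with h | h
      · left
        show toC ((H p.1 (p.2.1+1)).mulVec (uvec p.2.2)) = toC ((H p.1 p.2.1).mulVec (uvec p.2.2))
        rw [h]
      · right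
        show toC ((H p.1 (p.2.1+1)).mulVec (uvec p.2.2)) = -toC ((H p.1 p.2.1).mulVec (uvec p.2.2))
        rw [h, Matrix.neg_mulVec, toC_neg]
    have hsq' : Complex.exp (2 * L (p.1, p.2.1+1, p.2.2)) = Complex.exp (2 * L p) := by
      rcases hFeq with h | h <;>
        rw [two_mul, two_mul, Complex.exp_add, Complex.exp_add, e1, e2, h] <;> ring
    rw [Complex.exp_eq_exp_iff_exists_int] at hsq'
    obtain ⟨n, hn⟩ := hsq'
    refine ⟨n, ?_⟩
    have him := congrArg Complex.im hn
    have ha : (2 * L (p.1, p.2.1+1, p.2.2)).im = 2 * (L (p.1, p.2.1+1, p.2.2)).im := by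
      simp [Complex.mul_im]
    have hb : (2 * L p + (n:ℂ) * (2 * ↑π * Complex.I)).im = 2 * (L p).im + n * (2*π) := by
      simp [Complex.add_im, Complex.mul_im]
    rw [ha, hb] at him
    show (L (p.1, p.2.1+1, p.2.2)).im / (2*π) = (L p).im / (2*π) + (n:ℝ)/2
    have h2π : (2*π) ≠ 0 := by positivity
    rw [div_eq_iff h2π]
    have hrng : ((L p).im / (2*π) + (n:ℝ)/2) * (2*π) = (L p).im + n*π := by
      field_simp
    rw [hrng]
    linarith
  have hshiftcont : Continuous fun p : ℝ × ℝ × ℝ => Θ (p.1, p.2.1 + 1, p.2.2) :=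
    hΘcont.comp (continuous_fst.prodMk
      (((continuous_fst.comp continuous_snd).add continuous_const).prodMk
        (continuous_snd.comp continuous_snd)))
  have hg1 : ∀ p : ℝ × ℝ × ℝ, Θ (p.1, p.2.1 + 1, p.2.2) = Θ p + (k:ℝ)/2 := by
    have hgcont : Continuous fun p : ℝ × ℝ × ℝ => 2*(Θ (p.1, p.2.1 + 1, p.2.2) - Θ p) :=
      ((hshiftcont.sub hΘcont).const_smul (2:ℝ)).congr (fun p => by simp [smul_eq_mul])
    have hgint : ∀ p : ℝ × ℝ × ℝ, ∃ n : ℤ, 2*(Θ (p.1, p.2.1 + 1, p.2.2) - Θ p) = n := by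
      intro p
      obtain ⟨n, hn⟩ := hsq p
      exact ⟨n, by rw [hn]; ring⟩
    intro p
    have h := const_of_int_valued hgcont hgint p (1,0,0)
    simp only at h
    have hA : Θ ((1:ℝ),(0:ℝ)+1,(0:ℝ)) = 0 + (k:ℝ)*(0+1)/2 + m1 := hm1 (0+1) 0
    have hB : Θ ((1:ℝ),(0:ℝ),(0:ℝ)) = 0 + (k:ℝ)*0/2 + m1 := hm1 0 0
    rw [hA, hB] at h
    linarith
  -- y-shift by 1 : Θ increases by 1
  have hpy : ∀ p : ℝ × ℝ × ℝ, ∃ n : ℤ, Θ (p.1, p.2.1, p.2.2 + 1) = Θ p + n := by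
    intro p
    have e1 := hLexp (p.1, p.2.1, p.2.2 + 1)
    have e2 := hLexp p
    have hFeq : F (p.1, p.2.1, p.2.2+1) = F p := by
      show toC ((H p.1 p.2.1).mulVec (uvec (p.2.2+1))) = toC ((H p.1 p.2.1).mulVec (uvec p.2.2))
      rw [uvec_add_one]
    have hex : Complex.exp (L (p.1, p.2.1, p.2.2+1)) = Complex.exp (L p) := by
      rw [e1, e2, hFeq]
    rw [Complex.exp_eq_exp_iff_exists_int] at hex
    obtain ⟨n, hn⟩ := hex
    refine ⟨n, ?_⟩
    have him := congrArg Complex.im hn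
    have hb : (L p + (n:ℂ) * (2 * ↑π * Complex.I)).im = (L p).im + n * (2*π) := by
      simp [Complex.add_im, Complex.mul_im]
    rw [hb] at him
    show (L (p.1, p.2.1, p.2.2+1)).im / (2*π) = (L p).im / (2*π) + (n:ℝ)
    have h2π : (2*π) ≠ 0 := by positivity
    rw [div_eq_iff h2π]
    have hrng : ((L p).im / (2*π) + (n:ℝ)) * (2*π) = (L p).im + n*(2*π) := by
      field_simp
    rw [hrng]
    linarith
  have hycont : Continuous fun p : ℝ × ℝ × ℝ => Θ (p.1, p.2.1, p.2.2 + 1) :=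
    hΘcont.comp (continuous_fst.prodMk
      ((continuous_fst.comp continuous_snd).prodMk
        ((continuous_snd.comp continuous_snd).add continuous_const)))
  have hg2 : ∀ p : ℝ × ℝ × ℝ, Θ (p.1, p.2.1, p.2.2 + 1) = Θ p + 1 := by
    have hgcont : Continuous fun p : ℝ × ℝ × ℝ => Θ (p.1, p.2.1, p.2.2 + 1) - Θ p :=
      hycont.sub hΘcont
    have hgint : ∀ p : ℝ × ℝ × ℝ, ∃ n : ℤ, Θ (p.1, p.2.1, p.2.2 + 1) - Θ p = n := by
      intro p; obtain ⟨n, hn⟩ := hpy p; exact ⟨n, by rw [hn]; ring⟩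
    intro p
    have h := const_of_int_valued hgcont hgint p (1,0,0)
    simp only at h
    have hA : Θ ((1:ℝ),(0:ℝ),(0:ℝ)+1) = (0+1) + (k:ℝ)*0/2 + m1 := hm1 0 (0+1)
    have hB : Θ ((1:ℝ),(0:ℝ),(0:ℝ)) = 0 + (k:ℝ)*0/2 + m1 := hm1 0 0
    rw [hA, hB] at h
    linarith
  -- the lift for M
  set θf : ℝ → ℝ → ℝ := fun x y => Θ (0,x,y) with hθfdef
  have hθfcont : Continuous fun q : ℝ × ℝ => θf q.1 q.2 :=
    hΘcont.comp (continuous_const.prodMk continuous_id)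
  have hMact : ∀ x y : ℝ, (M x).mulVec (uvec y) = w (0,x,y) • uvec (θf x y) := by
    intro x y
    have h := hact (0,x,y)
    simp only at h
    rw [(hHends x).1] at h
    exact h
  -- boundedness
  have hBbound : ∃ C : ℝ, ∀ x y : ℝ, |θf x y - (k:ℝ)*x/2 - y| ≤ C := by
    set B : ℝ × ℝ → ℝ := fun q => θf q.1 q.2 - (k:ℝ)*q.1/2 - q.2 with hBdef
    have hBcont : Continuous B := by
      rw [hBdef]; fun_prop
    have hper1 : ∀ q : ℝ × ℝ, B (q.1 + 1, q.2) = B q := by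
      intro q
      have h := hg1 (0, q.1, q.2)
      simp only [hBdef, hθfdef]
      simp only at h
      rw [h]
      ring
    have hper2 : ∀ q : ℝ × ℝ, B (q.1, q.2 + 1) = B q := by
      intro q
      have h := hg2 (0, q.1, q.2)
      simp only [hBdef, hθfdef]
      simp only at h
      rw [h]
      ring
    have hK : IsCompact (Set.Icc ((0:ℝ),(0:ℝ)) (1,1)) := isCompact_Icc
    obtain ⟨C, hC⟩ := hK.exists_bound_of_continuousOn hBcont.continuousOn
    refine ⟨C, fun x y => ?_⟩
    have e1 : B (x, y) = B (Int.fract x, y) := by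
      have h := per_int (g := fun s => B (s, y)) (fun s => hper1 (s, y)) ⌊x⌋ (Int.fract x)
      rw [Int.fract_add_floor x] at h
      exact h
    have e2 : B (Int.fract x, y) = B (Int.fract x, Int.fract y) := by
      have h := per_int (g := fun s => B (Int.fract x, s)) (fun s => hper2 (Int.fract x, s))
        ⌊y⌋ (Int.fract y)
      rw [Int.fract_add_floor y] at h
      exact h
    have hmem : (Int.fract x, Int.fract y) ∈ Set.Icc ((0:ℝ),(0:ℝ)) (1,1) := by
      constructor
      · exact ⟨Int.fract_nonneg x, Int.fract_nonneg y⟩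
      · exact ⟨(Int.fract_lt_one x).le, (Int.fract_lt_one y).le⟩
    have := hC _ hmem
    rw [Real.norm_eq_abs] at this
    calc |θf x y - (k:ℝ)*x/2 - y| = |B (x,y)| := rfl
    _ = |B (Int.fract x, Int.fract y)| := by rw [e1, e2]
    _ ≤ C := this
  obtain ⟨C, hC⟩ := hBbound
  -- conjugation: matrix identity
  have hAM : ∀ x, A2 x * M x = M (x+α) * A1 x := by
    intro x
    have hu : IsUnit (M (x+α)).det := by rw [hMdet]; exact isUnit_one
    have h := congrArg (fun B => M (x+α) * B) (hconj x)
    rw [← Matrix.mul_assoc, ← Matrix.mul_assoc, Matrix.mul_nonsing_inv _ hu,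
      Matrix.one_mul] at h
    exact h
  -- pointwise relation
  have hrel : ∀ x y : ℝ, ∃ n : ℤ,
      θf (x+α) (y + φ1 x y) = θf x y + φ2 x (θf x y) + n := by
    intro x y
    have hv := congrArg (fun B : Matrix (Fin 2) (Fin 2) ℝ => B.mulVec (uvec y)) (hAM x)
    rw [← Matrix.mulVec_mulVec, ← Matrix.mulVec_mulVec, hMact x y, Matrix.mulVec_smul] at hv
    have l2 : (A2 x).mulVec (uvec (θf x y))
        = v2 x (θf x y) • uvec (θf x y + φ2 x (θf x y)) := hφ2lift x (θf x y)
    have l1 : (A1 x).mulVec (uvec y) = v1 x y • uvec (y + φ1 x y) := hφ1lift x y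
    rw [l2, l1, Matrix.mulVec_smul, hMact (x+α) (y + φ1 x y), smul_smul, smul_smul] at hv
    obtain ⟨n, hn⟩ := (expuv_inj (mul_pos (hwpos _) (hv2pos _ _))
      (mul_pos (hv1pos _ _) (hwpos _)) hv).2
    exact ⟨-n, by push_cast; linarith⟩
  have hNcont : Continuous fun q : ℝ × ℝ =>
      θf (q.1+α) (q.2 + φ1 q.1 q.2) - θf q.1 q.2 - φ2 q.1 (θf q.1 q.2) := by
    have c1 : Continuous fun q : ℝ × ℝ => θf (q.1+α) (q.2 + φ1 q.1 q.2) :=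
      hθfcont.comp ((continuous_fst.add continuous_const).prodMk
        (continuous_snd.add hφ1cont))
    have c3 : Continuous fun q : ℝ × ℝ => φ2 q.1 (θf q.1 q.2) :=
      hφ2cont.comp (continuous_fst.prodMk hθfcont)
    exact (c1.sub hθfcont).sub c3
  obtain ⟨nbar, hnbarv⟩ := hrel 0 0
  have hrelconst : ∀ x y : ℝ,
      θf (x+α) (y + φ1 x y) = θf x y + φ2 x (θf x y) + nbar := by
    intro x y
    have h := const_of_int_valued hNcont
      (fun q => by
        obtain ⟨n, hn⟩ := hrel q.1 q.2
        exact ⟨n, by rw [hn]; ring⟩) (x,y) (0,0)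
    simp only at h
    have h0 : θf (0+α) (0 + φ1 0 0) - θf 0 0 - φ2 0 (θf 0 0) = nbar := by
      rw [hnbarv]; ring
    linarith [h, h0]
  -- the induction
  set yy : ℕ → ℝ := liftIter α φ1 0 0 with hyy
  set zz : ℕ → ℝ := liftIter α φ2 0 (θf 0 0) with hzz
  have hzy : ∀ n : ℕ, zz n = θf ((n:ℝ)*α) (yy n) - (n:ℝ) * nbar := by
    intro n
    induction n with
    | zero =>
      simp [hzz, hyy, liftIter]
    | succ n ih =>
      have hstep2 : zz (n+1) = zz n + φ2 (0 + (n:ℝ)*α) (zz n) := rfl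
      have hstep1 : yy (n+1) = yy n + φ1 (0 + (n:ℝ)*α) (yy n) := rfl
      rw [hstep2, ih, hstep1]
      rw [show (0:ℝ) + (n:ℝ)*α = (n:ℝ)*α by ring]
      have hφeq : φ2 ((n:ℝ)*α) (θf ((n:ℝ)*α) (yy n) - (n:ℝ)*nbar)
          = φ2 ((n:ℝ)*α) (θf ((n:ℝ)*α) (yy n)) := by
        have harg : θf ((n:ℝ)*α) (yy n) - (n:ℝ)*(nbar:ℝ)
            = θf ((n:ℝ)*α) (yy n) + ((-(n:ℤ)*nbar : ℤ):ℝ) := by push_cast; ring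
        rw [harg]
        exact per_int (fun s => (hφ2per ((n:ℝ)*α) s).2) _ _
      rw [hφeq]
      have hrn := hrelconst ((n:ℝ)*α) (yy n)
      rw [show ((n+1:ℕ):ℝ)*α = (n:ℝ)*α + α by push_cast; ring]
      push_cast
      linarith [hrn]
  -- limits
  set ee : ℕ → ℝ := fun n => θf ((n:ℝ)*α) (yy n) - (k:ℝ)*((n:ℝ)*α)/2 - yy n with heedef
  have heebd : ∀ n, |ee n| ≤ C := fun n => hC _ _
  have ht1 : Filter.Tendsto (fun n : ℕ => (yy n - 0)/n) Filter.atTop (nhds ρ₁) := hlim1 0 0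
  have ht2 : Filter.Tendsto (fun n : ℕ => (zz n - θf 0 0)/n) Filter.atTop (nhds ρ₂) :=
    hlim2 0 (θf 0 0)
  have ht3 : Filter.Tendsto (fun n : ℕ => (θf 0 0)/n) Filter.atTop (nhds 0) :=
    tendsto_const_div_atTop_nhds_zero_nat _
  have ht4 : Filter.Tendsto (fun n : ℕ => ee n/n) Filter.atTop (nhds 0) := by
    apply squeeze_zero_norm (a := fun n : ℕ => C/n) _
      (tendsto_const_div_atTop_nhds_zero_nat C)
    intro n
    rw [Real.norm_eq_abs, abs_div, Nat.abs_cast]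
    rcases Nat.eq_zero_or_pos n with h | h
    · subst h; simp
    · have hpos : (0:ℝ) < n := Nat.cast_pos.mpr h
      exact (div_le_div_iff_of_pos_right hpos).mpr (heebd n)
  have hcomb : Filter.Tendsto
      (fun n : ℕ => (zz n - θf 0 0)/n + (θf 0 0)/n + ((nbar:ℝ) - (k:ℝ)*α/2) - ee n/n)
      Filter.atTop (nhds (ρ₂ + 0 + ((nbar:ℝ) - (k:ℝ)*α/2) - 0)) :=
    ((ht2.add ht3).add tendsto_const_nhds).sub ht4
  have heq : ∀ᶠ n : ℕ in Filter.atTop,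
      (zz n - θf 0 0)/n + (θf 0 0)/n + ((nbar:ℝ) - (k:ℝ)*α/2) - ee n/n = (yy n - 0)/n := by
    filter_upwards [Filter.eventually_ge_atTop 1] with n hn
    have hn0 : (n:ℝ) ≠ 0 := Nat.cast_ne_zero.mpr (by omega)
    rw [hzy n]
    have hth : θf ((n:ℝ)*α) (yy n) = yy n + (k:ℝ)*((n:ℝ)*α)/2 + ee n := by
      rw [heedef]; ring
    rw [hth]
    field_simp
    ring
  have hfinal := tendsto_nhds_unique (hcomb.congr' heq) ht1
  exact ⟨nbar, by linarith⟩
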